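/- For every n ≥ 0 the following three identities hold: r*_{n+1} + r*_n = α − α_n R*_n; r_{n+1} + r_n = (1 − α_n)R_n − β; and t R*_n − (t−1)R_n = 2n + 1 + α + β + γ. -/

import Mathlib

open MeasureTheory Real intervalIntegral

/-- The generalized Jacobi weight `w(x;t) = (x-t)^γ x^α (1-x)^β`. -/
noncomputable def genJacobiWeight (α β γ t x : ℝ) : ℝ :=
  (x - t) ^ γ * x ^ α * (1 - x) ^ β

section aux
variable {α β γ t : ℝ}

lemma wcont (hα : 0 < α) (hβ : 0 < β) (ht : t < 0) :
    ContinuousOn (genJacobiWeight α β γ t) (Set.Icc 0 1) := by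
  apply ContinuousOn.mul
  apply ContinuousOn.mul
  · exact ((continuous_id.sub continuous_const).continuousOn).rpow_const
      (fun x hx => Or.inl (by show x - t ≠ 0; intro h0; linarith [hx.1]))
  · exact continuousOn_id.rpow_const (fun x _ => Or.inr hα.le)
  · exact ((continuous_const.sub continuous_id).continuousOn).rpow_const
      (fun x _ => Or.inr hβ.le)

lemma w0 (hα : 0 < α) : genJacobiWeight α β γ t 0 = 0 := by
  simp [genJacobiWeight, Real.zero_rpow hα.ne']

lemma w1 (hβ : 0 < β) : genJacobiWeight α β γ t 1 = 0 := by
  simp [genJacobiWeight, Real.zero_rpow hβ.ne']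

/-- integrability of `c(x) * w(x) / x`. -/
lemma int_div_x (hα : 0 < α) (hβ : 0 < β) (ht : t < 0)
    {c : ℝ → ℝ} (hc : Continuous c) :
    IntervalIntegrable (fun x => c x * genJacobiWeight α β γ t x / x) volume 0 1 := by
  have hW := wcont (α := α) (β := β) (γ := γ) (t := t) hα hβ ht
  have hmeas : AEStronglyMeasurable (fun x => c x * genJacobiWeight α β γ t x / x)
      (volume.restrict (Set.Ioc 0 (1/2))) := by
    apply ContinuousOn.aestronglyMeasurable _ measurableSet_Ioc
    apply ContinuousOn.div
    · exact (hc.continuousOn).mul (hW.mono (fun x hx => ⟨le_of_lt hx.1, le_trans hx.2 (by norm_num)⟩))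
    · exact continuousOn_id
    · intro x hx; exact ne_of_gt hx.1
  apply IntervalIntegrable.trans (b := 1/2)
  · -- on [0, 1/2]
    obtain ⟨M, hM⟩ := (isCompact_Icc (a := (0:ℝ)) (b := 1/2)).exists_bound_of_continuousOn
      (f := fun x => c x * ((x - t) ^ γ * (1 - x) ^ β))
      (by
        apply (hc.continuousOn).mul
        apply ContinuousOn.mul
        · exact ((continuous_id.sub continuous_const).continuousOn).rpow_const
            (fun x hx => Or.inl (by show x - t ≠ 0; intro h0; linarith [hx.1]))
        · exact ((continuous_const.sub continuous_id).continuousOn).rpow_const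
            (fun x _ => Or.inr hβ.le))
    apply IntervalIntegrable.mono_fun
      ((intervalIntegral.intervalIntegrable_rpow' (a := (0:ℝ)) (b := 1/2)
        (show (-1:ℝ) < α - 1 by linarith)).const_mul M)
    · rw [Set.uIoc_of_le (by norm_num : (0:ℝ) ≤ 1/2)]; exact hmeas
    · rw [Set.uIoc_of_le (by norm_num : (0:ℝ) ≤ 1/2)]
      filter_upwards [ae_restrict_mem measurableSet_Ioc] with x hx
      have hx0 : 0 < x := hx.1
      have hx1 : x ≤ 1/2 := hx.2
      have harr : c x * genJacobiWeight α β γ t x / x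
          = (c x * ((x - t) ^ γ * (1 - x) ^ β)) * x ^ (α - 1) := by
        rw [Real.rpow_sub_one hx0.ne']
        unfold genJacobiWeight
        field_simp
      rw [harr]
      have hxa : 0 ≤ x ^ (α - 1) := Real.rpow_nonneg hx0.le _
      calc ‖c x * ((x - t) ^ γ * (1 - x) ^ β) * x ^ (α - 1)‖
          = ‖c x * ((x - t) ^ γ * (1 - x) ^ β)‖ * x ^ (α - 1) := by
            rw [norm_mul, Real.norm_of_nonneg hxa]
        _ ≤ M * x ^ (α - 1) := by
            apply mul_le_mul_of_nonneg_right _ hxa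
            exact hM x ⟨hx0.le, hx1⟩
        _ ≤ ‖M * x ^ (α - 1)‖ := le_abs_self _
  · -- on [1/2, 1]: continuous
    apply ContinuousOn.intervalIntegrable
    rw [Set.uIcc_of_le (by norm_num)]
    apply ContinuousOn.div
    · exact (hc.continuousOn).mul (hW.mono (fun x hx => ⟨le_trans (by norm_num) hx.1, hx.2⟩))
    · exact continuousOn_id
    · intro x hx; have : (1:ℝ)/2 ≤ x := hx.1; positivity

/-- integrability of `c(x) * w(x) / (1 - x)`. -/
lemma int_div_1x (hα : 0 < α) (hβ : 0 < β) (ht : t < 0)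
    {c : ℝ → ℝ} (hc : Continuous c) :
    IntervalIntegrable (fun x => c x * genJacobiWeight α β γ t x / (1 - x)) volume 0 1 := by
  have hW := wcont (α := α) (β := β) (γ := γ) (t := t) hα hβ ht
  have hmeas : AEStronglyMeasurable (fun x => c x * genJacobiWeight α β γ t x / (1 - x))
      (volume.restrict (Set.Ioc (1/2) 1)) := by
    rw [← Measure.restrict_congr_set Ioo_ae_eq_Ioc]
    apply ContinuousOn.aestronglyMeasurable _ measurableSet_Ioo
    apply ContinuousOn.div
    · exact (hc.continuousOn).mul
        (hW.mono (fun x hx => ⟨le_trans (by norm_num) hx.1.le, hx.2.le⟩))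
    · exact continuous_const.continuousOn.sub continuousOn_id
    · intro x hx
      have h2 : x < 1 := hx.2
      intro hcontra
      have : (1:ℝ) - x = 0 := hcontra
      linarith
  apply IntervalIntegrable.trans (b := 1/2)
  · -- on [0, 1/2]: continuous
    apply ContinuousOn.intervalIntegrable
    rw [Set.uIcc_of_le (by norm_num)]
    apply ContinuousOn.div
    · exact (hc.continuousOn).mul (hW.mono (fun x hx => ⟨hx.1, le_trans hx.2 (by norm_num)⟩))
    · exact continuous_const.continuousOn.sub continuousOn_id
    · intro x hx
      have h2 : x ≤ 1/2 := hx.2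
      intro hcontra
      have : (1:ℝ) - x = 0 := hcontra
      linarith
  · -- on [1/2, 1]
    obtain ⟨M, hM⟩ := (isCompact_Icc (a := (1:ℝ)/2) (b := 1)).exists_bound_of_continuousOn
      (f := fun x => c x * ((x - t) ^ γ * x ^ α))
      (by
        apply (hc.continuousOn).mul
        apply ContinuousOn.mul
        · exact ((continuous_id.sub continuous_const).continuousOn).rpow_const
            (fun x hx => Or.inl (by show x - t ≠ 0; intro h0; linarith [hx.1]))
        · exact continuousOn_id.rpow_const (fun x _ => Or.inr hα.le))
    have hint : IntervalIntegrable (fun x => M * (1 - x) ^ (β - 1)) volume (1/2) 1 := by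
      have := (intervalIntegral.intervalIntegrable_rpow' (a := (1:ℝ)/2) (b := 0)
        (show (-1:ℝ) < β - 1 by linarith)).comp_sub_left 1
      norm_num at this
      exact this.const_mul M
    apply IntervalIntegrable.mono_fun hint
    · rw [Set.uIoc_of_le (by norm_num : (1:ℝ)/2 ≤ 1)]; exact hmeas
    rw [Set.uIoc_of_le (by norm_num : (1:ℝ)/2 ≤ 1)]
    filter_upwards [ae_restrict_mem measurableSet_Ioc] with x hx
    rcases eq_or_lt_of_le hx.2 with h1 | h1
    · subst h1
      rw [w1 hβ]
      simp only [mul_zero, zero_div, norm_zero]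
      exact norm_nonneg _
    · have hx0 : (0:ℝ) < x := by linarith [hx.1]
      have harr : c x * genJacobiWeight α β γ t x / (1 - x)
          = (c x * ((x - t) ^ γ * x ^ α)) * (1 - x) ^ (β - 1) := by
        rw [Real.rpow_sub_one (by linarith : (1:ℝ) - x ≠ 0)]
        unfold genJacobiWeight
        field_simp
      rw [harr]
      have hxb : 0 ≤ (1 - x) ^ (β - 1) := Real.rpow_nonneg (by linarith) _
      calc ‖c x * ((x - t) ^ γ * x ^ α) * (1 - x) ^ (β - 1)‖
          = ‖c x * ((x - t) ^ γ * x ^ α)‖ * (1 - x) ^ (β - 1) := by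
            rw [norm_mul, Real.norm_of_nonneg hxb]
        _ ≤ M * (1 - x) ^ (β - 1) := by
            apply mul_le_mul_of_nonneg_right _ hxb
            exact hM x ⟨by linarith [hx.1], hx.2⟩
        _ ≤ ‖M * (1 - x) ^ (β - 1)‖ := le_abs_self _

end aux
section orth
variable {α β γ t : ℝ}

/-- integrability of `c * (p q w)` shape -/
lemma intA (hα : 0 < α) (hβ : 0 < β) (ht : t < 0) (c : ℝ) (p q : Polynomial ℝ) :
    IntervalIntegrable (fun x => c * (p.eval x * q.eval x * genJacobiWeight α β γ t x))
      volume 0 1 := by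
  apply ContinuousOn.intervalIntegrable
  rw [Set.uIcc_of_le (by norm_num : (0:ℝ) ≤ 1)]
  exact continuousOn_const.mul
    (((p.continuous.continuousOn.mul q.continuous.continuousOn)).mul (wcont hα hβ ht))

lemma intB (hα : 0 < α) (hβ : 0 < β) (ht : t < 0) (p q : Polynomial ℝ) :
    IntervalIntegrable (fun x => p.eval x * q.eval x * genJacobiWeight α β γ t x)
      volume 0 1 := by
  apply ContinuousOn.intervalIntegrable
  rw [Set.uIcc_of_le (by norm_num : (0:ℝ) ≤ 1)]
  exact ((p.continuous.continuousOn.mul q.continuous.continuousOn)).mul (wcont hα hβ ht)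

variable (hα : 0 < α) (hβ : 0 < β) (ht : t < 0)
  (P : ℕ → Polynomial ℝ) (h : ℕ → ℝ)
  (hmonic : ∀ n, (P n).Monic ∧ (P n).natDegree = n)
  (horth : ∀ m n, (∫ x in (0:ℝ)..1,
      (P m).eval x * (P n).eval x * genJacobiWeight α β γ t x)
    = if m = n then h n else 0)

include hα hβ ht hmonic horth in
lemma orth_lt (n : ℕ) : ∀ m, ∀ q : Polynomial ℝ, q.natDegree ≤ m → m < n →
    ∫ x in (0:ℝ)..1, q.eval x * (P n).eval x * genJacobiWeight α β γ t x = 0 := by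
  intro m
  induction m with
  | zero =>
    intro q hq hn
    have h0 : P 0 = 1 := ((hmonic 0).1.natDegree_eq_zero).mp (hmonic 0).2
    obtain ⟨cq, rfl⟩ := Polynomial.natDegree_eq_zero.mp (Nat.le_zero.mp hq)
    have key : ∀ x : ℝ, (Polynomial.C cq).eval x * (P n).eval x * genJacobiWeight α β γ t x
        = cq * ((P 0).eval x * (P n).eval x * genJacobiWeight α β γ t x) := by
      intro x; rw [h0]; simp; ring
    rw [intervalIntegral.integral_congr (fun x _ => key x), intervalIntegral.integral_const_mul,
      horth 0 n, if_neg (by omega), mul_zero]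
  | succ m ih =>
    intro q hq hn
    set cq := q.coeff (m + 1) with hcq
    set q' := q - Polynomial.C cq * P (m + 1) with hq'
    have hdeg' : q'.natDegree ≤ m := by
      rw [Polynomial.natDegree_le_iff_coeff_eq_zero]
      intro N hN
      rw [hq', Polynomial.coeff_sub, Polynomial.coeff_C_mul]
      rcases eq_or_lt_of_le (Nat.succ_le_of_lt hN) with hNe | hNgt
      · rw [← hNe]
        have : (P (m+1)).coeff (m+1) = 1 := by
          have := (hmonic (m+1)).1.coeff_natDegree
          rwa [(hmonic (m+1)).2] at this
        rw [this, mul_one, hcq]; ring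
      · rw [Polynomial.coeff_eq_zero_of_natDegree_lt (lt_of_le_of_lt hq hNgt),
          Polynomial.coeff_eq_zero_of_natDegree_lt (by rw [(hmonic (m+1)).2]; exact hNgt),
          mul_zero, sub_zero]
    have key : ∀ x : ℝ, q.eval x * (P n).eval x * genJacobiWeight α β γ t x
        = cq * ((P (m+1)).eval x * (P n).eval x * genJacobiWeight α β γ t x)
          + q'.eval x * (P n).eval x * genJacobiWeight α β γ t x := by
      intro x
      have : q'.eval x = q.eval x - cq * (P (m+1)).eval x := by
        rw [hq']; simp
      rw [this]; ring
    rw [intervalIntegral.integral_congr (fun x _ => key x),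
      intervalIntegral.integral_add (intA hα hβ ht _ _ _) (intB hα hβ ht _ _),
      intervalIntegral.integral_const_mul, horth (m+1) n, if_neg (by omega), mul_zero,
      ih q' hdeg' (by omega), add_zero]

include hα hβ ht hmonic horth in
lemma int_lead (n : ℕ) (q : Polynomial ℝ) (hq : q.natDegree ≤ n) :
    ∫ x in (0:ℝ)..1, q.eval x * (P n).eval x * genJacobiWeight α β γ t x
      = q.coeff n * h n := by
  cases n with
  | zero =>
    have h0 : P 0 = 1 := ((hmonic 0).1.natDegree_eq_zero).mp (hmonic 0).2
    obtain ⟨cq, rfl⟩ := Polynomial.natDegree_eq_zero.mp (Nat.le_zero.mp hq)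
    have key : ∀ x : ℝ, (Polynomial.C cq).eval x * (P 0).eval x * genJacobiWeight α β γ t x
        = cq * ((P 0).eval x * (P 0).eval x * genJacobiWeight α β γ t x) := by
      intro x; rw [h0]; simp
    rw [intervalIntegral.integral_congr (fun x _ => key x), intervalIntegral.integral_const_mul,
      horth 0 0, if_pos rfl, Polynomial.coeff_C_zero]
  | succ m =>
    set n := m + 1
    set cq := q.coeff n with hcq
    set q' := q - Polynomial.C cq * P n with hq'
    have hdeg' : q'.natDegree ≤ m := by
      rw [Polynomial.natDegree_le_iff_coeff_eq_zero]
      intro N hN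
      rw [hq', Polynomial.coeff_sub, Polynomial.coeff_C_mul]
      rcases eq_or_lt_of_le (Nat.succ_le_of_lt hN) with hNe | hNgt
      · rw [← hNe]
        have : (P n).coeff n = 1 := by
          have := (hmonic n).1.coeff_natDegree
          rwa [(hmonic n).2] at this
        rw [this, mul_one, hcq]; ring
      · rw [Polynomial.coeff_eq_zero_of_natDegree_lt (lt_of_le_of_lt hq hNgt),
          Polynomial.coeff_eq_zero_of_natDegree_lt (by rw [(hmonic n).2]; exact hNgt),
          mul_zero, sub_zero]
    have key : ∀ x : ℝ, q.eval x * (P n).eval x * genJacobiWeight α β γ t x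
        = cq * ((P n).eval x * (P n).eval x * genJacobiWeight α β γ t x)
          + q'.eval x * (P n).eval x * genJacobiWeight α β γ t x := by
      intro x
      have : q'.eval x = q.eval x - cq * (P n).eval x := by
        rw [hq']; simp
      rw [this]; ring
    rw [intervalIntegral.integral_congr (fun x _ => key x),
      intervalIntegral.integral_add (intA hα hβ ht _ _ _) (intB hα hβ ht _ _),
      intervalIntegral.integral_const_mul, horth n n, if_pos rfl,
      orth_lt hα hβ ht P h hmonic horth n m q' hdeg' (by omega), add_zero]

end orth
section rec
variable {α β γ t : ℝ}
variable (hα : 0 < α) (hβ : 0 < β) (ht : t < 0)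
  (P : ℕ → Polynomial ℝ) (h : ℕ → ℝ)
  (hmonic : ∀ n, (P n).Monic ∧ (P n).natDegree = n)
  (horth : ∀ m n, (∫ x in (0:ℝ)..1,
      (P m).eval x * (P n).eval x * genJacobiWeight α β γ t x)
    = if m = n then h n else 0)

include hα hβ ht hmonic horth in
lemma bh_eq (a b : ℕ → ℝ)
    (hrec : ∀ n, ∀ x : ℝ, x * (P n).eval x
      = (P (n + 1)).eval x + a n * (P n).eval x + b n * (P (n - 1)).eval x)
    (n : ℕ) (hn : 1 ≤ n) : b n * h (n - 1) = h n := by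
  have e : n - 1 + 1 = n := Nat.succ_pred_eq_of_pos hn
  set f : ℝ → ℝ := fun x => (x * (P (n-1)).eval x) * (P n).eval x * genJacobiWeight α β γ t x
    with hf
  have c1 : (∫ x in (0:ℝ)..1, f x) = h n := by
    have key : ∀ x ∈ Set.uIcc (0:ℝ) 1, f x
        = (P n).eval x * (P n).eval x * genJacobiWeight α β γ t x
          + (a (n-1) * ((P (n-1)).eval x * (P n).eval x * genJacobiWeight α β γ t x)
          + b (n-1) * ((P (n-1-1)).eval x * (P n).eval x * genJacobiWeight α β γ t x)) := by
      intro x _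
      have hr := hrec (n-1) x
      rw [e] at hr
      rw [hf]; simp only []
      rw [hr]; ring
    rw [intervalIntegral.integral_congr key,
      intervalIntegral.integral_add (intB hα hβ ht _ _) ((intA hα hβ ht _ _ _).add (intA hα hβ ht _ _ _)),
      intervalIntegral.integral_add (intA hα hβ ht _ _ _) (intA hα hβ ht _ _ _),
      intervalIntegral.integral_const_mul, intervalIntegral.integral_const_mul,
      horth n n, horth (n-1) n, horth (n-1-1) n, if_pos rfl, if_neg (by omega), if_neg (by omega)]
    ring
  have c2 : (∫ x in (0:ℝ)..1, f x) = b n * h (n - 1) := by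
    have key : ∀ x ∈ Set.uIcc (0:ℝ) 1, f x
        = (P (n+1)).eval x * (P (n-1)).eval x * genJacobiWeight α β γ t x
          + (a n * ((P n).eval x * (P (n-1)).eval x * genJacobiWeight α β γ t x)
          + b n * ((P (n-1)).eval x * (P (n-1)).eval x * genJacobiWeight α β γ t x)) := by
      intro x _
      have hr := hrec n x
      rw [hf]; simp only []
      rw [show x * (P (n-1)).eval x * (P n).eval x * genJacobiWeight α β γ t x
          = (x * (P n).eval x) * (P (n-1)).eval x * genJacobiWeight α β γ t x by ring, hr]
      ring
    rw [intervalIntegral.integral_congr key,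
      intervalIntegral.integral_add (intB hα hβ ht _ _) ((intA hα hβ ht _ _ _).add (intA hα hβ ht _ _ _)),
      intervalIntegral.integral_add (intA hα hβ ht _ _ _) (intA hα hβ ht _ _ _),
      intervalIntegral.integral_const_mul, intervalIntegral.integral_const_mul,
      horth (n+1) (n-1), horth n (n-1), horth (n-1) (n-1), if_pos rfl, if_neg (by omega),
      if_neg (by omega)]
    ring
  rw [← c1, c2]

include hα hβ ht hmonic horth in
lemma deriv_int (n : ℕ) :
    (∫ x in (0:ℝ)..1, ((Polynomial.X - Polynomial.C t) * (P n).derivative).eval x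
      * (P n).eval x * genJacobiWeight α β γ t x) = n * h n := by
  cases n with
  | zero =>
    have h0 : P 0 = 1 := ((hmonic 0).1.natDegree_eq_zero).mp (hmonic 0).2
    have : (Polynomial.X - Polynomial.C t) * (P 0).derivative = 0 := by
      rw [h0]; simp
    rw [this]
    simp
  | succ m =>
    set q := (Polynomial.X - Polynomial.C t) * (P (m+1)).derivative with hq
    have hdeg : q.natDegree ≤ m + 1 := by
      apply le_trans (Polynomial.natDegree_mul_le)
      have h1 : (Polynomial.X - Polynomial.C t).natDegree = 1 := Polynomial.natDegree_X_sub_C t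
      have h2 : (P (m+1)).derivative.natDegree ≤ m := by
        have := Polynomial.natDegree_derivative_le (P (m+1))
        rwa [(hmonic (m+1)).2] at this
      omega
    have hcoeff : q.coeff (m+1) = (m+1 : ℝ) := by
      rw [hq, sub_mul, Polynomial.coeff_sub, Polynomial.coeff_X_mul,
        Polynomial.coeff_C_mul, Polynomial.coeff_derivative, Polynomial.coeff_derivative]
      have e1 : (P (m+1)).coeff (m+1) = 1 := by
        have := (hmonic (m+1)).1.coeff_natDegree
        rwa [(hmonic (m+1)).2] at this
      have e2 : (P (m+1)).coeff (m+1+1) = 0 :=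
        Polynomial.coeff_eq_zero_of_natDegree_lt (by rw [(hmonic (m+1)).2]; omega)
      rw [e1, e2]
      push_cast
      ring
    rw [int_lead hα hβ ht P h hmonic horth (m+1) q hdeg, hcoeff]
    push_cast
    ring
end rec
section ftc
variable {α β γ t : ℝ}
variable (hα : 0 < α) (hβ : 0 < β) (ht : t < 0)
  (P : ℕ → Polynomial ℝ) (h : ℕ → ℝ)
  (hmonic : ∀ n, (P n).Monic ∧ (P n).natDegree = n)
  (horth : ∀ m n, (∫ x in (0:ℝ)..1,
      (P m).eval x * (P n).eval x * genJacobiWeight α β γ t x)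
    = if m = n then h n else 0)

include hα hβ ht hmonic horth in
lemma key3 (n : ℕ) :
    α * t * (∫ x in (0:ℝ)..1, ((P n).eval x)^2 * genJacobiWeight α β γ t x / x)
      + β * (1 - t) * (∫ x in (0:ℝ)..1, ((P n).eval x)^2 * genJacobiWeight α β γ t x / (1 - x))
      = (2 * n + 1 + α + β + γ) * h n := by
  set w := genJacobiWeight α β γ t with hw
  set q := (Polynomial.X - Polynomial.C t) * (P n).derivative with hqdef
  set F : ℝ → ℝ := fun y => ((y - t) * ((P n).eval y * (P n).eval y)) * w y with hF
  set G : ℝ → ℝ := fun y =>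
      (1 + α + β + γ) * ((P n).eval y * (P n).eval y * w y)
      + 2 * (q.eval y * (P n).eval y * w y)
      + ((-(α * t)) * ((P n).eval y * (P n).eval y)) * w y / y
      + ((-(β * (1 - t))) * ((P n).eval y * (P n).eval y)) * w y / (1 - y) with hG
  have hc1 : Continuous fun y : ℝ => (-(α * t)) * ((P n).eval y * (P n).eval y) := by
    exact continuous_const.mul ((P n).continuous.mul (P n).continuous)
  have hc2 : Continuous fun y : ℝ => (-(β * (1 - t))) * ((P n).eval y * (P n).eval y) := by
    exact continuous_const.mul ((P n).continuous.mul (P n).continuous)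
  have hGint : IntervalIntegrable G volume 0 1 :=
    (((intA hα hβ ht _ _ _).add (intA hα hβ ht _ _ _)).add (int_div_x hα hβ ht hc1)).add
      (int_div_1x hα hβ ht hc2)
  have hFcont : ContinuousOn F (Set.Icc 0 1) :=
    (((continuous_id.sub continuous_const).mul
      ((P n).continuous.mul (P n).continuous)).continuousOn).mul (wcont hα hβ ht)
  have hderiv : ∀ x ∈ Set.Ioo (0:ℝ) 1, HasDerivAt F (G x) x := by
    intro x hx
    have hx0 : (0:ℝ) < x := hx.1
    have hx1 : x < 1 := hx.2
    have hxt : (0:ℝ) < x - t := by linarith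
    have h1x : (0:ℝ) < 1 - x := by linarith
    have hlin : HasDerivAt (fun y : ℝ => y - t) 1 x := (hasDerivAt_id x).sub_const t
    have hP : HasDerivAt (fun y : ℝ => (P n).eval y) ((P n).derivative.eval x) x :=
      (P n).hasDerivAt x
    have hP2 := hP.mul hP
    have hw1 : HasDerivAt (fun y : ℝ => (y - t) ^ γ) (1 * γ * (x - t) ^ (γ - 1)) x :=
      hlin.rpow_const (Or.inl hxt.ne')
    have hw2 : HasDerivAt (fun y : ℝ => y ^ α) (1 * α * x ^ (α - 1)) x :=
      (hasDerivAt_id x).rpow_const (Or.inl hx0.ne')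
    have hw3 : HasDerivAt (fun y : ℝ => (1 - y) ^ β) ((-1) * β * (1 - x) ^ (β - 1)) x :=
      ((hasDerivAt_id x).const_sub 1).rpow_const (Or.inl h1x.ne')
    have hwderiv := (hw1.mul hw2).mul hw3
    have hFd := (hlin.mul hP2).mul hwderiv
    have : HasDerivAt F
        ((1 * ((P n).eval x * (P n).eval x)
            + (x - t) * ((P n).derivative.eval x * (P n).eval x
              + (P n).eval x * (P n).derivative.eval x))
          * ((x - t) ^ γ * x ^ α * (1 - x) ^ β)
        + ((x - t) * ((P n).eval x * (P n).eval x))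
          * ((1 * γ * (x - t) ^ (γ - 1) * x ^ α + (x - t) ^ γ * (1 * α * x ^ (α - 1)))
              * (1 - x) ^ β
            + (x - t) ^ γ * x ^ α * ((-1) * β * (1 - x) ^ (β - 1)))) x := hFd
    convert this using 1
    rw [hG]
    simp only [hqdef, Polynomial.eval_mul, Polynomial.eval_sub, Polynomial.eval_X,
      Polynomial.eval_C]
    rw [hw]
    show _ = _
    unfold genJacobiWeight
    rw [Real.rpow_sub_one hxt.ne', Real.rpow_sub_one hx0.ne', Real.rpow_sub_one h1x.ne']
    field_simp
    ring
  have hint : (∫ y in (0:ℝ)..1, G y) = F 1 - F 0 :=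
    intervalIntegral.integral_eq_sub_of_hasDerivAt_of_le (by norm_num) hFcont hderiv hGint
  have hF0 : F 0 = 0 := by rw [hF]; simp only [hw, w0 hα, mul_zero]
  have hF1 : F 1 = 0 := by rw [hF]; simp only [hw, w1 hβ, mul_zero]
  -- split the integral of G
  have split : (∫ y in (0:ℝ)..1, G y)
      = (1 + α + β + γ) * h n + 2 * ((n : ℝ) * h n)
        + (-(α * t)) * (∫ x in (0:ℝ)..1, ((P n).eval x)^2 * w x / x)
        + (-(β * (1 - t))) * (∫ x in (0:ℝ)..1, ((P n).eval x)^2 * w x / (1 - x)) := by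
    rw [hG]
    rw [intervalIntegral.integral_add
        (((intA hα hβ ht _ _ _).add (intA hα hβ ht _ _ _)).add (int_div_x hα hβ ht hc1))
        (int_div_1x hα hβ ht hc2),
      intervalIntegral.integral_add
        ((intA hα hβ ht _ _ _).add (intA hα hβ ht _ _ _)) (int_div_x hα hβ ht hc1),
      intervalIntegral.integral_add (intA hα hβ ht _ _ _) (intA hα hβ ht _ _ _)]
    congr 1
    congr 1
    congr 1
    · rw [intervalIntegral.integral_const_mul, horth n n, if_pos rfl]
    · rw [intervalIntegral.integral_const_mul, deriv_int hα hβ ht P h hmonic horth n]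
    · rw [show (fun x => (-(α * t)) * ((P n).eval x * (P n).eval x) * w x / x)
          = fun x => (-(α * t)) * (((P n).eval x)^2 * w x / x) by funext x; ring,
        intervalIntegral.integral_const_mul]
    · rw [show (fun x => (-(β * (1 - t))) * ((P n).eval x * (P n).eval x) * w x / (1 - x))
          = fun x => (-(β * (1 - t))) * (((P n).eval x)^2 * w x / (1 - x)) by funext x; ring,
        intervalIntegral.integral_const_mul]
  rw [split, hF0, hF1] at hint
  linarith [hint]
end ftc
section steps
variable {α β γ t : ℝ}
variable (hα : 0 < α) (hβ : 0 < β) (ht : t < 0)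
  (P : ℕ → Polynomial ℝ) (h : ℕ → ℝ)
  (horth : ∀ m n, (∫ x in (0:ℝ)..1,
      (P m).eval x * (P n).eval x * genJacobiWeight α β γ t x)
    = if m = n then h n else 0)
  (a b : ℕ → ℝ)
  (hrec : ∀ n, ∀ x : ℝ, x * (P n).eval x
    = (P (n + 1)).eval x + a n * (P n).eval x + b n * (P (n - 1)).eval x)

include hα hβ ht horth hrec in
lemma rs_step (n : ℕ) :
    (∫ y in (0:ℝ)..1, (P n).eval y * (P (n+1)).eval y * genJacobiWeight α β γ t y / y)
    = h n + (-(a n)) * (∫ y in (0:ℝ)..1, ((P n).eval y)^2 * genJacobiWeight α β γ t y / y)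
      + (-(b n)) * (∫ y in (0:ℝ)..1,
          (P (n-1)).eval y * (P n).eval y * genJacobiWeight α β γ t y / y) := by
  have hc1 : Continuous fun y : ℝ => (-(a n)) * ((P n).eval y * (P n).eval y) :=
    continuous_const.mul ((P n).continuous.mul (P n).continuous)
  have hc2 : Continuous fun y : ℝ => (-(b n)) * ((P (n-1)).eval y * (P n).eval y) :=
    continuous_const.mul ((P (n-1)).continuous.mul (P n).continuous)
  have key : ∀ y : ℝ, (P n).eval y * (P (n+1)).eval y * genJacobiWeight α β γ t y / y
      = (P n).eval y * (P n).eval y * genJacobiWeight α β γ t y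
        + ((-(a n)) * ((P n).eval y * (P n).eval y)) * genJacobiWeight α β γ t y / y
        + ((-(b n)) * ((P (n-1)).eval y * (P n).eval y)) * genJacobiWeight α β γ t y / y := by
    intro y
    rcases eq_or_ne y 0 with rfl | hy
    · rw [w0 hα]; simp
    · rw [show (P (n+1)).eval y
          = y * (P n).eval y - a n * (P n).eval y - b n * (P (n-1)).eval y by
            linarith [hrec n y]]
      field_simp
      ring
  rw [intervalIntegral.integral_congr (fun y _ => key y),
    intervalIntegral.integral_add ((intB hα hβ ht _ _).add (int_div_x hα hβ ht hc1))
      (int_div_x hα hβ ht hc2),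
    intervalIntegral.integral_add (intB hα hβ ht _ _) (int_div_x hα hβ ht hc1),
    horth n n, if_pos rfl]
  congr 1
  congr 1
  · rw [show (fun y => (-(a n)) * ((P n).eval y * (P n).eval y)
          * genJacobiWeight α β γ t y / y)
        = fun y => (-(a n)) * (((P n).eval y)^2 * genJacobiWeight α β γ t y / y) by
          funext y; ring,
      intervalIntegral.integral_const_mul]
  · rw [show (fun y => (-(b n)) * ((P (n-1)).eval y * (P n).eval y)
          * genJacobiWeight α β γ t y / y)
        = fun y => (-(b n)) * ((P (n-1)).eval y * (P n).eval y
            * genJacobiWeight α β γ t y / y) by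
          funext y; ring,
      intervalIntegral.integral_const_mul]

include hα hβ ht horth hrec in
lemma r_step (n : ℕ) :
    (∫ y in (0:ℝ)..1, (P n).eval y * (P (n+1)).eval y * genJacobiWeight α β γ t y / (1 - y))
    = -(h n) + (1 - a n) * (∫ y in (0:ℝ)..1,
          ((P n).eval y)^2 * genJacobiWeight α β γ t y / (1 - y))
      + (-(b n)) * (∫ y in (0:ℝ)..1,
          (P (n-1)).eval y * (P n).eval y * genJacobiWeight α β γ t y / (1 - y)) := by
  have hc1 : Continuous fun y : ℝ => (1 - a n) * ((P n).eval y * (P n).eval y) :=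
    continuous_const.mul ((P n).continuous.mul (P n).continuous)
  have hc2 : Continuous fun y : ℝ => (-(b n)) * ((P (n-1)).eval y * (P n).eval y) :=
    continuous_const.mul ((P (n-1)).continuous.mul (P n).continuous)
  have key : ∀ y : ℝ, (P n).eval y * (P (n+1)).eval y * genJacobiWeight α β γ t y / (1 - y)
      = (-1 : ℝ) * ((P n).eval y * (P n).eval y * genJacobiWeight α β γ t y)
        + ((1 - a n) * ((P n).eval y * (P n).eval y)) * genJacobiWeight α β γ t y / (1 - y)
        + ((-(b n)) * ((P (n-1)).eval y * (P n).eval y))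
            * genJacobiWeight α β γ t y / (1 - y) := by
    intro y
    rcases eq_or_ne y 1 with rfl | hy
    · rw [w1 hβ]; simp
    · have hy1 : (1:ℝ) - y ≠ 0 := by
        intro hc; apply hy; linarith
      rw [show (P (n+1)).eval y
          = y * (P n).eval y - a n * (P n).eval y - b n * (P (n-1)).eval y by
            linarith [hrec n y]]
      field_simp
      ring
  rw [intervalIntegral.integral_congr (fun y _ => key y),
    intervalIntegral.integral_add ((intA hα hβ ht _ _ _).add (int_div_1x hα hβ ht hc1))
      (int_div_1x hα hβ ht hc2),
    intervalIntegral.integral_add (intA hα hβ ht _ _ _) (int_div_1x hα hβ ht hc1)]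
  congr 1
  congr 1
  · rw [intervalIntegral.integral_const_mul, horth n n, if_pos rfl]
    ring
  · rw [show (fun y => (1 - a n) * ((P n).eval y * (P n).eval y)
          * genJacobiWeight α β γ t y / (1 - y))
        = fun y => (1 - a n) * (((P n).eval y)^2 * genJacobiWeight α β γ t y / (1 - y)) by
          funext y; ring,
      intervalIntegral.integral_const_mul]
  · rw [show (fun y => (-(b n)) * ((P (n-1)).eval y * (P n).eval y)
          * genJacobiWeight α β γ t y / (1 - y))
        = fun y => (-(b n)) * ((P (n-1)).eval y * (P n).eval y
            * genJacobiWeight α β γ t y / (1 - y)) by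
          funext y; ring,
      intervalIntegral.integral_const_mul]

end steps
theorem statement8
    (α β γ t : ℝ) (hα : 0 < α) (hβ : 0 < β) (ht : t < 0)
    (P : ℕ → Polynomial ℝ) (h : ℕ → ℝ)
    (hmonic : ∀ n, (P n).Monic ∧ (P n).natDegree = n)
    (hpos : ∀ n, 0 < h n)
    (horth : ∀ m n, (∫ x in (0:ℝ)..1,
        (P m).eval x * (P n).eval x * genJacobiWeight α β γ t x)
      = if m = n then h n else 0)
    (a b : ℕ → ℝ) (hb0 : b 0 = 0)
    (hrec : ∀ n, ∀ x : ℝ, x * (P n).eval x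
      = (P (n + 1)).eval x + a n * (P n).eval x + b n * (P (n - 1)).eval x)
    (R Rs r rs : ℕ → ℝ)
    (hR : ∀ n, R n = β / h n *
      ∫ y in (0:ℝ)..1, ((P n).eval y) ^ 2 * genJacobiWeight α β γ t y / (1 - y))
    (hRs : ∀ n, Rs n = α / h n *
      ∫ y in (0:ℝ)..1, ((P n).eval y) ^ 2 * genJacobiWeight α β γ t y / y)
    (hr0 : r 0 = 0) (hrs0 : rs 0 = 0)
    (hr : ∀ n, 1 ≤ n → r n = β / h (n - 1) *
      ∫ y in (0:ℝ)..1, (P (n - 1)).eval y * (P n).eval y * genJacobiWeight α β γ t y / (1 - y))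
    (hrs : ∀ n, 1 ≤ n → rs n = α / h (n - 1) *
      ∫ y in (0:ℝ)..1, (P (n - 1)).eval y * (P n).eval y * genJacobiWeight α β γ t y / y) :
    ∀ n : ℕ,
      rs (n + 1) + rs n = α - a n * Rs n ∧
      r (n + 1) + r n = (1 - a n) * R n - β ∧
      t * Rs n - (t - 1) * R n = 2 * n + 1 + α + β + γ := by
  intro n
  have hhn := (hpos n).ne'
  refine ⟨?_, ?_, ?_⟩
  · -- rs identity
    have hrs1 := hrs (n+1) (by omega)
    simp only [Nat.add_sub_cancel] at hrs1
    have key : rs n = α / h n * (b n * ∫ y in (0:ℝ)..1,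
        (P (n-1)).eval y * (P n).eval y * genJacobiWeight α β γ t y / y) := by
      cases n with
      | zero => simp [hrs0, hb0]
      | succ m =>
        have hb := bh_eq hα hβ ht P h hmonic horth a b hrec (m+1) (by omega)
        have hrsn := hrs (m+1) (by omega)
        simp only [Nat.add_sub_cancel] at hb hrsn ⊢
        rw [hrsn]
        set J := ∫ y in (0:ℝ)..1, (P m).eval y * (P (m+1)).eval y
          * genJacobiWeight α β γ t y / y with hJ
        have h1 := (hpos (m+1)).ne'
        have h2 : h m ≠ 0 := (hpos m).ne'
        field_simp
        linear_combination (-J) * hb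
    rw [hrs1, rs_step hα hβ ht P h horth a b hrec n, key, hRs n]
    field_simp
    ring
  · -- r identity
    have hr1 := hr (n+1) (by omega)
    simp only [Nat.add_sub_cancel] at hr1
    have key : r n = β / h n * (b n * ∫ y in (0:ℝ)..1,
        (P (n-1)).eval y * (P n).eval y * genJacobiWeight α β γ t y / (1 - y)) := by
      cases n with
      | zero => simp [hr0, hb0]
      | succ m =>
        have hb := bh_eq hα hβ ht P h hmonic horth a b hrec (m+1) (by omega)
        have hrn := hr (m+1) (by omega)
        simp only [Nat.add_sub_cancel] at hb hrn ⊢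
        rw [hrn]
        set J := ∫ y in (0:ℝ)..1, (P m).eval y * (P (m+1)).eval y
          * genJacobiWeight α β γ t y / (1 - y) with hJ
        have h1 := (hpos (m+1)).ne'
        have h2 : h m ≠ 0 := (hpos m).ne'
        field_simp
        linear_combination (-J) * hb
    rw [hr1, r_step hα hβ ht P h horth a b hrec n, key, hR n]
    field_simp
    ring
  · -- third identity
    have k3 := key3 hα hβ ht P h hmonic horth n
    rw [hRs n, hR n]
    field_simp
    linear_combination k3
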